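/- The tree mover's distance TMD_w^L(G_a, G_b) := OT_{TD_w}(ρ(𝒯_{G_a}^L, 𝒯_{G_b}^L)) is a pseudometric on finite attributed graphs for every finite depth L > 0: it vanishes on equal graphs, is symmetric, and satisfies the triangle inequality. -/

import Mathlib

open scoped BigOperators


noncomputable section

/-- Unnormalized optimal transport between equal-cardinality multisets (represented
as lists): the minimum over bijective matchings of the summed ground costs. -/
noncomputable def listOT {α : Type*} (d : α → α → ℝ) (X Y : List α) : ℝ :=
  sInf {c : ℝ | ∃ Y' : List α, Y.Perm Y' ∧ c = (List.zipWith d X Y').sum}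

/-- Blank augmentation `ρ`: pad the smaller multiset with copies of the blank
element `b` so that both multisets have equal cardinality. -/
def pad {α : Type*} (b : α) (X Y : List α) : List α × List α :=
  (X ++ List.replicate (Y.length - X.length) b,
   Y ++ List.replicate (X.length - Y.length) b)

/-- Blank-augmented unnormalized optimal transport `OT_d(ρ(X, Y))`. -/
noncomputable def otPad {α : Type*} (d : α → α → ℝ) (b : α) (X Y : List α) : ℝ :=
  listOT d (pad b X Y).1 (pad b X Y).2

/-- Rooted trees with node features in `ℝ^p`; children are recorded as a list
(representing the multiset of child subtrees). -/
inductive RTree (p : ℕ) : Type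
  | node : EuclideanSpace ℝ (Fin p) → List (RTree p) → RTree p

namespace RTree

variable {p : ℕ}

/-- The blank tree: a single node with zero feature vector and no children. -/
def blank : RTree p := node 0 []

mutual
  /-- Depth of a rooted tree (a single node has depth 1). -/
  def depth : RTree p → ℕ
    | node _ cs => 1 + depthList cs
  /-- Maximal depth of a list of trees. -/
  def depthList : List (RTree p) → ℕ
    | [] => 0
    | t :: ts => max (depth t) (depthList ts)
end

/-- Tree distance with recursion fuel: `tdAux w n` computes the hierarchical-OT
tree distance `TD_w` correctly whenever `n` is at least the maximal depth. -/
noncomputable def tdAux (w : ℕ → ℝ) : ℕ → RTree p → RTree p → ℝ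
  | 0, _, _ => 0
  | n + 1, node x cs, node y ds =>
      ‖x - y‖ +
        (if 1 < max (node x cs).depth (node y ds).depth then
          w (max (node x cs).depth (node y ds).depth) * otPad (tdAux w n) blank cs ds
        else 0)

/-- The tree distance `TD_w`: distance of root features, plus `w(L)` times the
blank-augmented unnormalized OT between the multisets of child subtrees (with
`TD_w` as the recursive ground cost), `L` being the maximum depth. -/
noncomputable def TD (w : ℕ → ℝ) (Ta Tb : RTree p) : ℝ :=
  tdAux w (max Ta.depth Tb.depth) Ta Tb

/-- Number of nodes at a level of the tree (level `0` is the root, so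
`Width_l(T) = widthAt T (l-1)` in 1-indexed level notation). -/
def widthAt : RTree p → ℕ → ℕ
  | _, 0 => 1
  | node _ cs, l + 1 => (cs.map (fun c => widthAt c l)).sum
termination_by t l => l

/-- Every node feature in the tree is nonzero. -/
inductive NoZero : RTree p → Prop
  | node {x : EuclideanSpace ℝ (Fin p)} {cs : List (RTree p)} :
      x ≠ 0 → (∀ t ∈ cs, NoZero t) → NoZero (RTree.node x cs)

/-- Equivalence of rooted labelled trees up to reordering of children (fuel
version). -/
def equivAux : ℕ → RTree p → RTree p → Prop
  | 0, _, _ => True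
  | n + 1, node x cs, node y ds =>
      x = y ∧ ∃ ds' : List (RTree p), ds.Perm ds' ∧ List.Forall₂ (equivAux n) cs ds'

/-- Two rooted labelled trees are isomorphic: equal roots and children match up
to a bijection level by level. -/
def Equiv' (Ta Tb : RTree p) : Prop := equivAux (max Ta.depth Tb.depth) Ta Tb

end RTree

/-- Depth-`(k+1)` computation tree of node `v`: `compTree G x 0 v` is the single
node `v` with its feature, and the level-`(k+1)` tree attaches the depth-`k`
computation trees of the neighbors of `v`. -/
noncomputable def compTree {V : Type*} [Fintype V] {p : ℕ} (G : SimpleGraph V)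
    [DecidableRel G.Adj] (x : V → EuclideanSpace ℝ (Fin p)) : ℕ → V → RTree p
  | 0, v => RTree.node (x v) []
  | k + 1, v => RTree.node (x v) (((G.neighborFinset v).val.toList).map (compTree G x k))

/-- Tree Mover's Distance `TMD_w^L`: blank-augmented unnormalized OT between the
multisets of depth-`L` computation trees of the two attributed graphs, with the
hierarchical tree distance `TD_w` as ground cost. -/
noncomputable def TMD {Va Vb : Type*} [Fintype Va] [Fintype Vb] {p : ℕ}
    (w : ℕ → ℝ) (L : ℕ)
    (Ga : SimpleGraph Va) [DecidableRel Ga.Adj] (xa : Va → EuclideanSpace ℝ (Fin p))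
    (Gb : SimpleGraph Vb) [DecidableRel Gb.Adj] (xb : Vb → EuclideanSpace ℝ (Fin p)) : ℝ :=
  otPad (RTree.TD w) RTree.blank
    ((Finset.univ.val.toList).map (compTree Ga xa (L - 1)))
    ((Finset.univ.val.toList).map (compTree Gb xb (L - 1)))


namespace TMDAux

open List

variable {α : Type*}

def S (d : α → α → ℝ) (X Y : List α) : Set ℝ :=
  {c : ℝ | ∃ Y' : List α, Y.Perm Y' ∧ c = (List.zipWith d X Y').sum}

def cost (d : α → α → ℝ) (P : List (α × α)) : ℝ := (P.map fun q => d q.1 q.2).sum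

theorem listOT_eq_sInf (d : α → α → ℝ) (X Y : List α) : listOT d X Y = sInf (S d X Y) := rfl

theorem zipWith_eq_map_zip (f : α → α → ℝ) :
    ∀ (l₁ l₂ : List α), zipWith f l₁ l₂ = (l₁.zip l₂).map fun p => f p.1 p.2
  | [], l₂ => by simp
  | a :: l₁, [] => by simp
  | a :: l₁, b :: l₂ => by simp [zipWith_eq_map_zip f l₁ l₂]

theorem exists_perm_map {β : Type*} (f : β → α) :
    ∀ (m : List α) (l : List β), (l.map f).Perm m → ∃ l', l.Perm l' ∧ l'.map f = m := by
  classical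
  intro m
  induction m with
  | nil =>
    intro l h
    have : l.map f = [] := List.Perm.eq_nil h
    exact ⟨l, .refl _, this⟩
  | cons a m ih =>
    intro l h
    have ha : a ∈ l.map f := h.mem_iff.mpr (mem_cons_self (a := a) (l := m))
    obtain ⟨b, hb, rfl⟩ := mem_map.mp ha
    have h1 : l.Perm (b :: l.erase b) := perm_cons_erase hb
    have h2 : ((l.erase b).map f).Perm m := ((h1.map f).symm.trans h).cons_inv
    obtain ⟨l', hl', hm⟩ := ih (l.erase b) h2
    exact ⟨b :: l', h1.trans (hl'.cons b), by simp [hm]⟩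

theorem cost_mem_S {d : α → α → ℝ} {X Y : List α} (P : List (α × α))
    (h1 : P.map Prod.fst = X) (h2 : (P.map Prod.snd).Perm Y) : cost d P ∈ S d X Y := by
  refine ⟨P.map Prod.snd, h2.symm, ?_⟩
  subst h1
  rw [zipWith_map, zipWith_self]
  rfl

theorem cost_perm {d : α → α → ℝ} {P Q : List (α × α)} (h : P.Perm Q) : cost d P = cost d Q :=
  (h.map _).sum_eq

theorem cost_mem_S' {d : α → α → ℝ} {X Y : List α} (P : List (α × α))
    (h1 : (P.map Prod.fst).Perm X) (h2 : (P.map Prod.snd).Perm Y) : cost d P ∈ S d X Y := by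
  obtain ⟨P', hPP', hP'⟩ := exists_perm_map Prod.fst X P h1
  rw [cost_perm hPP']
  exact cost_mem_S P' hP' (((hPP'.map Prod.snd).symm).trans h2)

theorem exists_pairs_of_mem_S {d : α → α → ℝ} {X Y : List α} {c : ℝ}
    (hc : c ∈ S d X Y) (hlen : X.length = Y.length) :
    ∃ P : List (α × α), P.map Prod.fst = X ∧ (P.map Prod.snd).Perm Y ∧ c = cost d P := by
  obtain ⟨Y', hY', rfl⟩ := hc
  have hl : X.length = Y'.length := by rw [hlen, hY'.length_eq]
  refine ⟨X.zip Y', map_fst_zip hl.le, ?_, ?_⟩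
  · rw [map_snd_zip hl.ge]
    exact hY'.symm
  · rw [zipWith_eq_map_zip]
    rfl

theorem sum_zipWith_nonneg {d : α → α → ℝ} (hd : ∀ a b, 0 ≤ d a b) :
    ∀ (X Y : List α), 0 ≤ (zipWith d X Y).sum
  | [], _ => by simp
  | _ :: _, [] => by simp
  | a :: X, b :: Y => by
    simp only [zipWith_cons_cons, sum_cons]
    exact add_nonneg (hd a b) (sum_zipWith_nonneg hd X Y)

theorem S_nonempty (d : α → α → ℝ) (X Y : List α) : (S d X Y).Nonempty :=
  ⟨_, Y, .refl _, rfl⟩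

theorem S_bdd {d : α → α → ℝ} (hd : ∀ a b, 0 ≤ d a b) (X Y : List α) : BddBelow (S d X Y) := by
  refine ⟨0, fun c hc => ?_⟩
  obtain ⟨Y', _, rfl⟩ := hc
  exact sum_zipWith_nonneg hd X Y'

theorem listOT_nonneg {d : α → α → ℝ} (hd : ∀ a b, 0 ≤ d a b) (X Y : List α) :
    0 ≤ listOT d X Y := by
  apply Real.sInf_nonneg
  rintro c ⟨Y', _, rfl⟩
  exact sum_zipWith_nonneg hd X Y'

theorem listOT_le {d : α → α → ℝ} (hd : ∀ a b, 0 ≤ d a b) {X Y : List α} {c : ℝ}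
    (hc : c ∈ S d X Y) : listOT d X Y ≤ c :=
  csInf_le (S_bdd hd X Y) hc

theorem le_listOT {d : α → α → ℝ} {X Y : List α} {r : ℝ}
    (h : ∀ c ∈ S d X Y, r ≤ c) : r ≤ listOT d X Y :=
  le_csInf (S_nonempty d X Y) h

theorem listOT_self {d : α → α → ℝ} (hd0 : ∀ a, d a a = 0) (hd : ∀ a b, 0 ≤ d a b)
    (X : List α) : listOT d X X = 0 := by
  refine le_antisymm (listOT_le hd ⟨X, .refl _, ?_⟩) (listOT_nonneg hd X X)
  rw [zipWith_self]
  exact (List.sum_eq_zero (by simp [hd0])).symm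

theorem S_subset_swap {d : α → α → ℝ} (hsymm : ∀ a b, d a b = d b a) {X Y : List α}
    (hlen : X.length = Y.length) : S d X Y ⊆ S d Y X := by
  intro c hc
  obtain ⟨P, h1, h2, rfl⟩ := exists_pairs_of_mem_S hc hlen
  have hmem := cost_mem_S' (d := d) (X := Y) (Y := X) (P.map Prod.swap)
    (by rw [List.map_map]; exact h2) (by rw [List.map_map]; exact h1 ▸ .refl _)
  have : cost d (P.map Prod.swap) = cost d P := by
    simp only [cost, List.map_map]
    congr 1
    exact List.map_congr_left fun q _ => hsymm q.2 q.1
  rwa [this] at hmem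

theorem listOT_symm {d : α → α → ℝ} (hd : ∀ a b, 0 ≤ d a b) (hsymm : ∀ a b, d a b = d b a)
    {X Y : List α} (hlen : X.length = Y.length) : listOT d X Y = listOT d Y X := by
  refine le_antisymm ?_ ?_ <;>
    [exact csInf_le_csInf (S_bdd hd X Y) (S_nonempty d Y X) (S_subset_swap hsymm hlen.symm);
     exact csInf_le_csInf (S_bdd hd Y X) (S_nonempty d X Y) (S_subset_swap hsymm hlen)]

theorem glue {d : α → α → ℝ} (hd3 : ∀ a b c, d a c ≤ d a b + d b c) :
    ∀ (P Q : List (α × α)), Q.map Prod.fst = P.map Prod.snd →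
      ∃ R : List (α × α), R.map Prod.fst = P.map Prod.fst ∧ R.map Prod.snd = Q.map Prod.snd ∧
        cost d R ≤ cost d P + cost d Q := by
  intro P
  induction P with
  | nil =>
    intro Q h
    have : Q = [] := by simpa using h
    subst this
    exact ⟨[], rfl, rfl, by simp [cost]⟩
  | cons p P ih =>
    intro Q h
    cases Q with
    | nil => simp at h
    | cons q Q =>
      simp only [map_cons, List.cons.injEq] at h
      obtain ⟨h1, h2⟩ := h
      obtain ⟨R, hR1, hR2, hR3⟩ := ih Q h2
      refine ⟨(p.1, q.2) :: R, by simp [hR1], by simp [hR2], ?_⟩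
      simp only [cost, map_cons, sum_cons] at hR3 ⊢
      have ht : d p.1 q.2 ≤ d p.1 q.1 + d q.1 q.2 := hd3 p.1 q.1 q.2
      rw [h1] at ht
      have hq : d q.1 q.2 = d p.2 q.2 := by rw [h1]
      linarith

theorem listOT_triangle {d : α → α → ℝ} (hd : ∀ a b, 0 ≤ d a b)
    (hd3 : ∀ a b c, d a c ≤ d a b + d b c) {X Y Z : List α}
    (hXY : X.length = Y.length) (hYZ : Y.length = Z.length) :
    listOT d X Z ≤ listOT d X Y + listOT d Y Z := by
  have key : ∀ c1 ∈ S d X Y, ∀ c2 ∈ S d Y Z, listOT d X Z ≤ c1 + c2 := by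
    intro c1 hc1 c2 hc2
    obtain ⟨P, hP1, hP2, rfl⟩ := exists_pairs_of_mem_S hc1 hXY
    obtain ⟨Q, hQ1, hQ2, rfl⟩ := exists_pairs_of_mem_S hc2 hYZ
    obtain ⟨Q', hQQ', hQ'1⟩ := exists_perm_map Prod.fst (P.map Prod.snd) Q (hQ1 ▸ hP2.symm)
    obtain ⟨R, hR1, hR2, hR3⟩ := glue hd3 P Q' hQ'1
    have hmem : cost d R ∈ S d X Z :=
      cost_mem_S R (hR1.trans hP1) (hR2 ▸ ((hQQ'.map Prod.snd).symm.trans hQ2))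
    calc listOT d X Z ≤ cost d R := listOT_le hd hmem
      _ ≤ cost d P + cost d Q' := hR3
      _ = cost d P + cost d Q := by rw [cost_perm hQQ'.symm]
  have h1 : ∀ c2 ∈ S d Y Z, listOT d X Z - c2 ≤ listOT d X Y := fun c2 hc2 =>
    le_listOT fun c1 hc1 => by linarith [key c1 hc1 c2 hc2]
  have h2 : listOT d X Z - listOT d X Y ≤ listOT d Y Z :=
    le_listOT fun c2 hc2 => by linarith [h1 c2 hc2]
  linarith

theorem zipWith_congr {d d' : α → α → ℝ} :
    ∀ {X Y : List α}, (∀ a ∈ X, ∀ b ∈ Y, d a b = d' a b) → zipWith d X Y = zipWith d' X Y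
  | [], _, _ => by simp
  | _ :: _, [], _ => by simp
  | a :: X, b :: Y, h => by
    simp only [zipWith_cons_cons]
    rw [h a (mem_cons_self (a := a) (l := X)) b (mem_cons_self (a := b) (l := Y)),
      zipWith_congr fun a' ha' b' hb' => h a' (mem_cons_of_mem a ha') b' (mem_cons_of_mem b hb')]

theorem listOT_congr {d d' : α → α → ℝ} {X Y : List α}
    (h : ∀ a ∈ X, ∀ b ∈ Y, d a b = d' a b) : listOT d X Y = listOT d' X Y := by
  unfold listOT
  congr 1
  ext c
  constructor <;> rintro ⟨Y', hp, rfl⟩ <;> refine ⟨Y', hp, ?_⟩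
  · rw [zipWith_congr fun a ha b hb => h a ha b (hp.mem_iff.mpr hb)]
  · rw [zipWith_congr fun a ha b hb => h a ha b (hp.mem_iff.mpr hb)]

end TMDAux

namespace TMDAux
open List
variable {α : Type*}

theorem listOT_append_blank {d : α → α → ℝ} (b : α) (hd : ∀ a b, 0 ≤ d a b)
    (hb : d b b = 0) (hd3 : ∀ a b c, d a c ≤ d a b + d b c) {X Y : List α}
    (hlen : X.length = Y.length) :
    listOT d (X ++ [b]) (Y ++ [b]) = listOT d X Y := by
  classical
  apply _root_.le_antisymm
  · refine le_listOT fun c hc => ?_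
    obtain ⟨Y', hp, rfl⟩ := hc
    refine listOT_le hd ⟨Y' ++ [b], hp.append_right [b], ?_⟩
    rw [zipWith_append (by rw [hlen, hp.length_eq])]
    simp [hb]
  · refine le_listOT fun c hc => ?_
    obtain ⟨P, hP1, hP2, rfl⟩ := exists_pairs_of_mem_S hc (by simp [hlen])
    obtain ⟨P₀, pb, rfl, hP₀, hpb⟩ := map_eq_append_iff.mp hP1
    obtain ⟨p, rfl⟩ : ∃ p, pb = [p] := by
      cases pb with
      | nil => simp at hpb
      | cons p t =>
        cases t with
        | nil => exact ⟨p, rfl⟩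
        | cons _ _ => simp at hpb
    simp only [map_cons, map_nil, List.cons.injEq] at hpb
    obtain ⟨hp1, -⟩ := hpb
    have hsnd : (P₀.map Prod.snd ++ [p.2]).Perm (Y ++ [b]) := by simpa using hP2
    have hsnd' : (p.2 :: P₀.map Prod.snd).Perm (b :: Y) :=
      ((perm_append_singleton _ _).symm.trans hsnd).trans (perm_append_singleton _ _)
    have hcost : cost d (P₀ ++ [p]) = cost d P₀ + d p.1 p.2 := by simp [cost]
    by_cases hyb : p.2 = b
    · rw [hyb] at hsnd'
      have hmem : cost d P₀ ∈ S d X Y := cost_mem_S P₀ hP₀ hsnd'.cons_inv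
      calc listOT d X Y ≤ cost d P₀ := listOT_le hd hmem
        _ ≤ cost d (P₀ ++ [p]) := by rw [hcost]; nlinarith [hd p.1 p.2]
    · have hbmem : b ∈ P₀.map Prod.snd := by
        have : b ∈ p.2 :: P₀.map Prod.snd := hsnd'.mem_iff.mpr (mem_cons_self (a := b) (l := Y))
        rcases mem_cons.mp this with h | h
        · exact absurd h.symm hyb
        · exact h
      obtain ⟨q, hq, hq2⟩ := mem_map.mp hbmem
      obtain ⟨P₁, hperm⟩ : ∃ P₁, P₀.Perm (q :: P₁) := ⟨_, perm_cons_erase hq⟩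
      have hfst : ((⟨q.1, p.2⟩ :: P₁ : List (α × α)).map Prod.fst).Perm X := by
        have h0 : ((q :: P₁).map Prod.fst).Perm X := by
          rw [← hP₀]; exact (hperm.map Prod.fst).symm
        simpa using h0
      have hmap : (P₀.map Prod.snd).Perm (b :: P₁.map Prod.snd) := by
        have := hperm.map Prod.snd
        simpa [hq2] using this
      have hchain : (b :: p.2 :: P₁.map Prod.snd).Perm (b :: Y) :=
        ((Perm.swap p.2 b _).trans ((hmap.symm).cons p.2)).trans hsnd'
      have hsnd2 : ((⟨q.1, p.2⟩ :: P₁ : List (α × α)).map Prod.snd).Perm Y := by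
        simpa using hchain.cons_inv
      have hmem : cost d (⟨q.1, p.2⟩ :: P₁) ∈ S d X Y := cost_mem_S' _ hfst hsnd2
      have hcost₀ : cost d P₀ = d q.1 b + cost d P₁ := by
        rw [cost_perm hperm]; simp [cost, hq2]
      calc listOT d X Y ≤ cost d (⟨q.1, p.2⟩ :: P₁) := listOT_le hd hmem
        _ = d q.1 p.2 + cost d P₁ := by simp [cost]
        _ ≤ (d q.1 b + d b p.2) + cost d P₁ := by linarith [hd3 q.1 b p.2]
        _ ≤ cost d (P₀ ++ [p]) := by rw [hcost, hcost₀, hp1]; linarith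

theorem listOT_append_replicate {d : α → α → ℝ} (b : α) (hd : ∀ a b, 0 ≤ d a b)
    (hb : d b b = 0) (hd3 : ∀ a b c, d a c ≤ d a b + d b c) :
    ∀ (k : ℕ) {X Y : List α}, X.length = Y.length →
      listOT d (X ++ replicate k b) (Y ++ replicate k b) = listOT d X Y := by
  intro k
  induction k with
  | zero => intro X Y _; simp
  | succ k ih =>
    intro X Y hlen
    have e1 : X ++ replicate (k + 1) b = (X ++ [b]) ++ replicate k b := by
      simp [replicate_succ, List.append_assoc]
    have e2 : Y ++ replicate (k + 1) b = (Y ++ [b]) ++ replicate k b := by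
      simp [replicate_succ, List.append_assoc]
    rw [e1, e2, ih (by simp [hlen]), listOT_append_blank b hd hb hd3 hlen]

/-- pad both lists to a common length `M`. -/
def padTo (b : α) (M : ℕ) (X : List α) : List α := X ++ replicate (M - X.length) b

@[simp] theorem padTo_length (b : α) {M : ℕ} {X : List α} (h : X.length ≤ M) :
    (padTo b M X).length = M := by simp [padTo]; omega

theorem otPad_eq_padTo {d : α → α → ℝ} (b : α) (hd : ∀ a b, 0 ≤ d a b)
    (hb : d b b = 0) (hd3 : ∀ a b c, d a c ≤ d a b + d b c) {M : ℕ} {X Y : List α}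
    (hX : X.length ≤ M) (hY : Y.length ≤ M) :
    otPad d b X Y = listOT d (padTo b M X) (padTo b M Y) := by
  have e1 : padTo b M X = (pad b X Y).1 ++ replicate (M - max X.length Y.length) b := by
    simp only [padTo, pad, List.append_assoc, ← replicate_add]
    congr 2
    omega
  have e2 : padTo b M Y = (pad b X Y).2 ++ replicate (M - max X.length Y.length) b := by
    simp only [padTo, pad, List.append_assoc, ← replicate_add]
    congr 2
    omega
  have hlen : (pad b X Y).1.length = (pad b X Y).2.length := by
    simp [pad]; omega
  rw [e1, e2, listOT_append_replicate b hd hb hd3 _ hlen]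
  rfl

theorem otPad_nonneg {d : α → α → ℝ} (b : α) (hd : ∀ a b, 0 ≤ d a b) (X Y : List α) :
    0 ≤ otPad d b X Y := listOT_nonneg hd _ _

theorem otPad_self {d : α → α → ℝ} (b : α) (hd0 : ∀ a, d a a = 0) (hd : ∀ a b, 0 ≤ d a b)
    (X : List α) : otPad d b X X = 0 := by
  unfold otPad
  simp only [pad, Nat.sub_self, replicate_zero, List.append_nil]
  exact listOT_self hd0 hd X

theorem otPad_symm {d : α → α → ℝ} (b : α) (hd : ∀ a b, 0 ≤ d a b)
    (hsymm : ∀ a b, d a b = d b a) (X Y : List α) : otPad d b X Y = otPad d b Y X := by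
  have h1 : (pad b X Y).1 = (pad b Y X).2 := rfl
  have h2 : (pad b X Y).2 = (pad b Y X).1 := rfl
  unfold otPad
  rw [h1, h2]
  exact listOT_symm hd hsymm (by simp [pad]; omega)

theorem otPad_triangle {d : α → α → ℝ} (b : α) (hd : ∀ a b, 0 ≤ d a b)
    (hb : d b b = 0) (hd3 : ∀ a b c, d a c ≤ d a b + d b c) (X Y Z : List α) :
    otPad d b X Z ≤ otPad d b X Y + otPad d b Y Z := by
  set M := max (max X.length Y.length) Z.length with hM
  have hX : X.length ≤ M := by omega
  have hY : Y.length ≤ M := by omega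
  have hZ : Z.length ≤ M := by omega
  rw [otPad_eq_padTo b hd hb hd3 hX hZ, otPad_eq_padTo b hd hb hd3 hX hY,
    otPad_eq_padTo b hd hb hd3 hY hZ]
  exact listOT_triangle hd hd3 (by rw [padTo_length b hX, padTo_length b hY])
    (by rw [padTo_length b hY, padTo_length b hZ])

theorem otPad_congr {d d' : α → α → ℝ} (b : α) {X Y : List α}
    (h : ∀ a, (a ∈ X ∨ a = b) → ∀ c, (c ∈ Y ∨ c = b) → d a c = d' a c) :
    otPad d b X Y = otPad d' b X Y := by
  unfold otPad
  apply listOT_congr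
  intro a ha c hc
  refine h a ?_ c ?_
  · rcases mem_append.mp ha with h' | h'
    · exact Or.inl h'
    · exact Or.inr (eq_of_mem_replicate h')
  · rcases mem_append.mp hc with h' | h'
    · exact Or.inl h'
    · exact Or.inr (eq_of_mem_replicate h')

theorem otPad_nil_nil (d : α → α → ℝ) (b : α) : otPad d b [] [] = 0 := by
  unfold otPad
  simp only [pad, List.length_nil, Nat.sub_self, replicate_zero, List.append_nil,
    List.nil_append]
  have : S d ([] : List α) [] = {0} := by
    ext c
    constructor
    · rintro ⟨Y', hp, rfl⟩; simp
    · rintro rfl; exact ⟨[], .refl _, by simp⟩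
  rw [listOT_eq_sInf, this, csInf_singleton]

end TMDAux

namespace TMDAux
open RTree

variable {p : ℕ}

noncomputable def td' (w : ℕ → ℝ) : ℕ → RTree p → RTree p → ℝ
  | 0, _, _ => 0
  | k + 1, .node x cs, .node y ds => ‖x - y‖ + w (k + 1) * otPad (td' w k) blank cs ds

theorem td'_props (w : ℕ → ℝ) (hw : ∀ l, 0 ≤ w l) : ∀ k : ℕ,
    (∀ A B : RTree p, 0 ≤ td' w k A B) ∧ (∀ A : RTree p, td' w k A A = 0) ∧
    (∀ A B : RTree p, td' w k A B = td' w k B A) ∧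
    (∀ A B C : RTree p, td' w k A C ≤ td' w k A B + td' w k B C) := by
  intro k
  induction k with
  | zero =>
    refine ⟨fun A B => ?_, fun A => rfl, fun A B => rfl, fun A B C => ?_⟩ <;> simp [td']
  | succ k ih =>
    obtain ⟨hnn, h0, hsymm, htri⟩ := ih
    refine ⟨?_, ?_, ?_, ?_⟩
    · rintro ⟨x, cs⟩ ⟨y, ds⟩
      exact add_nonneg (norm_nonneg _) (mul_nonneg (hw _) (otPad_nonneg _ hnn _ _))
    · rintro ⟨x, cs⟩
      simp only [td']
      rw [otPad_self blank h0 hnn]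
      simp
    · rintro ⟨x, cs⟩ ⟨y, ds⟩
      simp only [td']
      rw [norm_sub_rev, otPad_symm blank hnn hsymm]
    · rintro ⟨x, cs⟩ ⟨y, ds⟩ ⟨z, es⟩
      simp only [td']
      have h1 := otPad_triangle blank hnn (h0 blank) htri cs ds es
      have h2 : ‖x - z‖ ≤ ‖x - y‖ + ‖y - z‖ := norm_sub_le_norm_sub_add_norm_sub x y z
      have h3 := mul_le_mul_of_nonneg_left h1 (hw (k + 1))
      nlinarith

inductive SF : ℕ → RTree p → Prop
  | leaf (x : EuclideanSpace ℝ (Fin p)) : SF 1 (.node x [])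
  | node (x : EuclideanSpace ℝ (Fin p)) (cs : List (RTree p)) (k : ℕ) (hne : cs ≠ [])
      (h : ∀ c ∈ cs, SF k c) : SF (k + 1) (.node x cs)

theorem SF_pos {k : ℕ} {t : RTree p} (h : SF k t) : 1 ≤ k := by
  cases h <;> omega

theorem depthList_eq {k : ℕ} : ∀ {cs : List (RTree p)}, cs ≠ [] →
    (∀ c ∈ cs, RTree.depth c = k) → RTree.depthList cs = k := by
  intro cs
  induction cs with
  | nil => intro h; exact absurd rfl h
  | cons c cs ih =>
    intro _ h
    cases cs with
    | nil => simp [RTree.depthList, h c (by simp)]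
    | cons c' cs' =>
      rw [RTree.depthList, h c (by simp), ih (by simp) fun t ht => h t (List.mem_cons_of_mem _ ht)]
      simp

theorem SF_depth : ∀ {k : ℕ} {t : RTree p}, SF k t → t.depth = k := by
  intro k t h
  induction h with
  | leaf x => simp [RTree.depth, RTree.depthList]
  | node x cs k hne h ih =>
    rw [RTree.depth, depthList_eq hne ih]
    omega

theorem SF_one {x : EuclideanSpace ℝ (Fin p)} {cs : List (RTree p)}
    (h : SF 1 (RTree.node x cs)) : cs = [] := by
  cases h with
  | leaf => rfl
  | node _ _ _ hne hch =>
    obtain ⟨c, hc⟩ := List.exists_mem_of_ne_nil _ hne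
    exact absurd (SF_pos (hch c hc)) (by omega)

theorem SF_node_inv {k : ℕ} {x : EuclideanSpace ℝ (Fin p)} {cs : List (RTree p)}
    (h : SF (k + 1) (RTree.node x cs)) (hne : cs ≠ []) :
    1 ≤ k ∧ ∀ c ∈ cs, SF k c := by
  cases h with
  | leaf => exact absurd rfl hne
  | node _ _ _ hne' hch =>
    obtain ⟨c, hc⟩ := List.exists_mem_of_ne_nil _ hne'
    exact ⟨SF_pos (hch c hc), hch⟩

theorem SF_blank : SF 1 (RTree.blank (p := p)) := SF.leaf 0

theorem tdAux_eq_td' (w : ℕ → ℝ) : ∀ (k : ℕ), 1 ≤ k → ∀ (n : ℕ) (A B : RTree p),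
    max A.depth B.depth ≤ n → (SF k A ∨ SF 1 A) → (SF k B ∨ SF 1 B) →
    tdAux w n A B = td' w k A B := by
  intro k
  induction k with
  | zero => omega
  | succ k ih =>
    intro _ n A B hn hA hB
    obtain ⟨x, cs⟩ := A
    obtain ⟨y, ds⟩ := B
    have hdx1 : 1 ≤ (RTree.node x cs).depth := by rw [RTree.depth]; omega
    obtain ⟨n, rfl⟩ : ∃ n', n = n' + 1 := ⟨n - 1, by omega⟩
    by_cases hboth : cs = [] ∧ ds = []
    · obtain ⟨rfl, rfl⟩ := hboth
      have hd : (RTree.node x ([] : List (RTree p))).depth = 1 := by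
        rw [RTree.depth, RTree.depthList]
      have hd' : (RTree.node y ([] : List (RTree p))).depth = 1 := by
        rw [RTree.depth, RTree.depthList]
      simp only [tdAux, td', hd, hd']
      rw [if_neg (by simp), otPad_nil_nil]
      ring
    · have hA' : cs ≠ [] → SF (k + 1) (RTree.node x cs) :=
        fun hne => hA.resolve_right fun h1 => hne (SF_one h1)
      have hB' : ds ≠ [] → SF (k + 1) (RTree.node y ds) :=
        fun hne => hB.resolve_right fun h1 => hne (SF_one h1)
      have hk : 1 ≤ k := by
        rcases not_and_or.mp hboth with h | h
        · exact (SF_node_inv (hA' h) h).1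
        · exact (SF_node_inv (hB' h) h).1
      have hd1 : (RTree.node x cs).depth = k + 1 ∨ (RTree.node x cs).depth = 1 :=
        hA.imp SF_depth SF_depth
      have hd2 : (RTree.node y ds).depth = k + 1 ∨ (RTree.node y ds).depth = 1 :=
        hB.imp SF_depth SF_depth
      have hmax : max (RTree.node x cs).depth (RTree.node y ds).depth = k + 1 := by
        rcases not_and_or.mp hboth with h | h
        · have := SF_depth (hA' h)
          omega
        · have := SF_depth (hB' h)
          omega
      have hcs : ∀ c ∈ cs, SF k c ∨ SF 1 c := fun c hc =>
        Or.inl ((SF_node_inv (hA' (List.ne_nil_of_mem hc)) (List.ne_nil_of_mem hc)).2 c hc)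
      have hds : ∀ c ∈ ds, SF k c ∨ SF 1 c := fun c hc =>
        Or.inl ((SF_node_inv (hB' (List.ne_nil_of_mem hc)) (List.ne_nil_of_mem hc)).2 c hc)
      have hkn : k ≤ n := by omega
      simp only [tdAux, td', hmax]
      rw [if_pos (by omega)]
      congr 1
      congr 1
      apply otPad_congr
      intro a ha b hb
      have hSa : SF k a ∨ SF 1 a := by
        rcases ha with h | rfl
        · exact hcs a h
        · exact Or.inr SF_blank
      have hSb : SF k b ∨ SF 1 b := by
        rcases hb with h | rfl
        · exact hds b h
        · exact Or.inr SF_blank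
      have hda : a.depth ≤ k := by rcases hSa with h | h <;> rw [SF_depth h] <;> omega
      have hdb : b.depth ≤ k := by rcases hSb with h | h <;> rw [SF_depth h] <;> omega
      exact ih hk n a b (le_trans (max_le hda hdb) hkn) hSa hSb

theorem compTree_SF {V : Type*} [Fintype V] (G : SimpleGraph V) [DecidableRel G.Adj]
    (x : V → EuclideanSpace ℝ (Fin p)) :
    ∀ (k : ℕ) (v : V), (G.neighborFinset v).Nonempty → SF (k + 1) (compTree G x k v) := by
  intro k
  induction k with
  | zero => intro v _; exact SF.leaf (x v)
  | succ k ih =>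
    intro v hv
    show SF (k + 1 + 1) (RTree.node (x v) (((G.neighborFinset v).val.toList).map (compTree G x k)))
    refine SF.node _ _ _ ?_ ?_
    · simp only [ne_eq, List.map_eq_nil_iff, Multiset.toList_eq_nil, Finset.val_eq_zero]
      exact hv.ne_empty
    · intro c hc
      obtain ⟨u, hu, rfl⟩ := List.mem_map.mp hc
      have hu' : u ∈ G.neighborFinset v :=
        Finset.mem_def.mpr (Multiset.mem_toList.mp hu)
      have hadj : G.Adj v u := (SimpleGraph.mem_neighborFinset _ _ _).mp hu'
      exact ih u ⟨v, (SimpleGraph.mem_neighborFinset _ _ _).mpr hadj.symm⟩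

theorem compTree_SF_or {V : Type*} [Fintype V] (G : SimpleGraph V) [DecidableRel G.Adj]
    (x : V → EuclideanSpace ℝ (Fin p)) (k : ℕ) (v : V) :
    SF (k + 1) (compTree G x k v) ∨ SF 1 (compTree G x k v) := by
  by_cases h : (G.neighborFinset v).Nonempty
  · exact Or.inl (compTree_SF G x k v h)
  · right
    have hnil : (G.neighborFinset v).val.toList = [] := by
      rw [Multiset.toList_eq_nil, Finset.val_eq_zero]
      exact Finset.not_nonempty_iff_eq_empty.mp h
    cases k with
    | zero => exact SF.leaf (x v)
    | succ k =>
      show SF 1 (RTree.node (x v) (((G.neighborFinset v).val.toList).map (compTree G x k)))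
      rw [hnil]
      exact SF.leaf (x v)

theorem TMD_eq_td' {Va Vb : Type*} [Fintype Va] [Fintype Vb]
    (w : ℕ → ℝ) (L : ℕ) (hL : 0 < L)
    (Ga : SimpleGraph Va) [DecidableRel Ga.Adj] (xa : Va → EuclideanSpace ℝ (Fin p))
    (Gb : SimpleGraph Vb) [DecidableRel Gb.Adj] (xb : Vb → EuclideanSpace ℝ (Fin p)) :
    TMD w L Ga xa Gb xb = otPad (td' w L) RTree.blank
      ((Finset.univ.val.toList).map (compTree Ga xa (L - 1)))
      ((Finset.univ.val.toList).map (compTree Gb xb (L - 1))) := by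
  unfold TMD
  apply otPad_congr
  intro A hA B hB
  have hL1 : L - 1 + 1 = L := by omega
  have hSA : SF L A ∨ SF 1 A := by
    rcases hA with h | rfl
    · obtain ⟨v, _, rfl⟩ := List.mem_map.mp h
      rw [← hL1]
      exact compTree_SF_or Ga xa (L - 1) v
    · exact Or.inr SF_blank
  have hSB : SF L B ∨ SF 1 B := by
    rcases hB with h | rfl
    · obtain ⟨v, _, rfl⟩ := List.mem_map.mp h
      rw [← hL1]
      exact compTree_SF_or Gb xb (L - 1) v
    · exact Or.inr SF_blank
  exact tdAux_eq_td' w L (by omega) _ A B (le_refl _) hSA hSB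

end TMDAux


/-- The Tree Mover's Distance `TMD_w^L` is a pseudometric on finite attributed
graphs for every finite depth `L > 0`: it vanishes on equal graphs, is
symmetric, and satisfies the triangle inequality. -/
theorem TMD_pseudometric {Va Vb Vc : Type*} [Fintype Va] [Fintype Vb] [Fintype Vc]
    {p : ℕ} (w : ℕ → ℝ) (hw : ∀ l, 0 < w l) (L : ℕ) (hL : 0 < L)
    (Ga : SimpleGraph Va) [DecidableRel Ga.Adj] (xa : Va → EuclideanSpace ℝ (Fin p))
    (Gb : SimpleGraph Vb) [DecidableRel Gb.Adj] (xb : Vb → EuclideanSpace ℝ (Fin p))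
    (Gc : SimpleGraph Vc) [DecidableRel Gc.Adj] (xc : Vc → EuclideanSpace ℝ (Fin p)) :
    TMD w L Ga xa Ga xa = 0 ∧
    TMD w L Ga xa Gb xb = TMD w L Gb xb Ga xa ∧
    TMD w L Ga xa Gb xb ≤ TMD w L Ga xa Gc xc + TMD w L Gc xc Gb xb := by
  obtain ⟨hnn, h0, hsymm, htri⟩ := TMDAux.td'_props (p := p) w (fun l => (hw l).le) L
  rw [TMDAux.TMD_eq_td' w L hL Ga xa Ga xa, TMDAux.TMD_eq_td' w L hL Ga xa Gb xb,
    TMDAux.TMD_eq_td' w L hL Gb xb Ga xa, TMDAux.TMD_eq_td' w L hL Ga xa Gc xc,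
    TMDAux.TMD_eq_td' w L hL Gc xc Gb xb]
  refine ⟨TMDAux.otPad_self _ h0 hnn _, TMDAux.otPad_symm _ hnn hsymm _ _, ?_⟩
  exact TMDAux.otPad_triangle _ hnn (h0 _) htri _ _ _


end
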